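/- Let J(K|K') be a reduced J-group with p ≥ 3 (K' has at most two entries > 1, pairwise coprime). Then the normal closure of {s_i^{k'_i} : 1 ≤ i ≤ p} in J(K) surjects onto W_K^+ under the map J(K) → W_K^+ (s_i ↦ a_i); equivalently, the inner automorphism group of J(K|K') is isomorphic to W_K^+. -/

import Mathlib

/-- The cyclically rotated product `a_i a_{i+1} ⋯ a_{i+p-1}` in the free group on `Fin p`
(indices taken mod `p`). -/
def cycProd (p : ℕ) (i : Fin p) : FreeGroup (Fin p) :=
  (List.ofFn (fun j : Fin p => FreeGroup.of (i + j))).prod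

/-- Relators of the generalized parent J-group `J(K)`:
`⟨s_1,…,s_p ∣ s_1⋯s_p = s_2⋯s_p s_1 = ⋯ = s_p s_1⋯s_{p-1}, s_i^{k_i} = 1 if k_i < ∞⟩`.
Here `k i = 0` encodes `k_i = ∞` (the relator `s_i ^ 0` is vacuous), and the equalities of
all cyclic rotations of the product are encoded by the relators
`(s_i ⋯ s_{i+p-1}) (s_j ⋯ s_{j+p-1})⁻¹`. -/
def JRels (p : ℕ) (k : Fin p → ℕ) : Set (FreeGroup (Fin p)) :=
  {r | (∃ i, r = FreeGroup.of i ^ k i) ∨ ∃ i j, r = cycProd p i * (cycProd p j)⁻¹}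

/-- The generalized parent J-group `J(K)`. -/
abbrev JGroup (p : ℕ) (k : Fin p → ℕ) := PresentedGroup (JRels p k)

/-- The central element `z = s_1 s_2 ⋯ s_p` of `J(K)`. -/
def zElt (p : ℕ) (k : Fin p → ℕ) : JGroup p k :=
  (List.ofFn (fun i : Fin p => (PresentedGroup.of i : JGroup p k))).prod

/-- Relators for `W_K⁺ = ⟨a_1,…,a_p ∣ a_i^{k_i} = 1 (k_i < ∞), a_1⋯a_p = 1⟩`. -/
def altRels (d : ℕ) (k : Fin d → ℕ) : Set (FreeGroup (Fin d)) :=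
  {r | (∃ i, r = FreeGroup.of i ^ k i) ∨
    r = (List.ofFn (fun i : Fin d => FreeGroup.of i)).prod}

section Helpers
variable {G : Type*} [Group G]



private lemma prodL0 (f : ℕ → G) : ∀ n, (∀ l < n, f l = 1) → ((List.range n).map f).prod = 1 := by
  intro n h
  induction n with
  | zero => simp
  | succ m ih =>
    rw [List.range_succ, List.map_append, List.prod_append]
    simp [ih (fun l hl => h l (hl.trans (Nat.lt_succ_self m))), h m (Nat.lt_succ_self m)]

private lemma prodL1 (f : ℕ → G) (i0 : ℕ) : ∀ n, i0 < n → (∀ l < n, l ≠ i0 → f l = 1) →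
    ((List.range n).map f).prod = f i0 := by
  intro n hi h
  induction n with
  | zero => omega
  | succ m ih =>
    rw [List.range_succ, List.map_append, List.prod_append]
    rcases eq_or_lt_of_le (Nat.lt_succ_iff.mp hi) with he | hlt
    · rw [prodL0 f m (fun l hl => h l (hl.trans (Nat.lt_succ_self m)) (by omega))]
      simp [he]
    · rw [ih hlt (fun l hl hne => h l (hl.trans (Nat.lt_succ_self m)) hne)]
      simp [h m (Nat.lt_succ_self m) (by omega)]

private lemma prodL2 (f : ℕ → G) (i0 j0 : ℕ) (hij : i0 < j0) :
    ∀ n, j0 < n → (∀ l < n, l ≠ i0 → l ≠ j0 → f l = 1) →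
    ((List.range n).map f).prod = f i0 * f j0 := by
  intro n hj h
  induction n with
  | zero => omega
  | succ m ih =>
    rw [List.range_succ, List.map_append, List.prod_append]
    rcases eq_or_lt_of_le (Nat.lt_succ_iff.mp hj) with he | hlt
    · rw [prodL1 f i0 m (he ▸ hij) (fun l hl hne => h l (hl.trans (Nat.lt_succ_self m)) hne (by omega))]
      simp [he]
    · rw [ih hlt (fun l hl h1 h2 => h l (hl.trans (Nat.lt_succ_self m)) h1 h2)]
      simp [h m (Nat.lt_succ_self m) (by omega) (by omega)]

private lemma ofFn_prod_eq (p : ℕ) (g : Fin p → G) :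
    (List.ofFn g).prod =
      ((List.range p).map (fun l => if h : l < p then g ⟨l, h⟩ else 1)).prod := by
  congr 1
  rw [List.ofFn_eq_map]
  apply List.ext_getElem
  · simp
  · intro n h1 h2
    simp only [List.getElem_map, List.getElem_range, List.getElem_finRange]
    rw [dif_pos (by simpa using h2)]
    rfl


end Helpers

/-- Let `J(K∣K')` be a reduced J-group with `p ≥ 3` (`K'` has at most two
entries different from `1`, and its entries are pairwise coprime).  Let `π : J(K) →* W_K⁺`
be the natural map `s_i ↦ a_i` (the quotient by the center).  Then the normal closure of
`{s_i^{k'_i}}` in `J(K)` surjects onto `W_K⁺` under `π`; equivalently, the inner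
automorphism group of `J(K∣K')` is isomorphic to `W_K⁺`. -/

theorem stmt18 (p : ℕ) (hp : 3 ≤ p) (k k' : Fin p → ℕ) (hk : ∀ i, k i ≠ 1)
    (hdvd : ∀ i, k' i ∣ k i) (hfin : ∀ i, k' i ≠ 0)
    (hcop : ∀ i j, i ≠ j → Nat.Coprime (k' i) (k' j))
    (hred : ∃ i j : Fin p, ∀ l, l ≠ i → l ≠ j → k' l = 1)
    (π : JGroup p k →* PresentedGroup (altRels p k))
    (hπ : ∀ i, π (PresentedGroup.of i) = PresentedGroup.of i) :
    Subgroup.map π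
      (Subgroup.normalClosure
        {x | ∃ i : Fin p, x = (PresentedGroup.of i : JGroup p k) ^ k' i}) = ⊤ := by
  classical
  have hsurj : Function.Surjective π := by
    rw [← MonoidHom.range_eq_top, eq_top_iff,
      ← PresentedGroup.closure_range_of (altRels p k)]
    refine (Subgroup.closure_le _).mpr ?_
    rintro _ ⟨i, rfl⟩
    exact ⟨PresentedGroup.of i, hπ i⟩
  rw [Subgroup.map_normalClosure _ _ hsurj]
  have himg : π '' {x | ∃ i : Fin p, x = (PresentedGroup.of i : JGroup p k) ^ k' i}
      = {x : PresentedGroup (altRels p k) | ∃ i : Fin p,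
          x = (PresentedGroup.of i : PresentedGroup (altRels p k)) ^ k' i} := by
    ext x
    constructor
    · rintro ⟨y, ⟨i, rfl⟩, rfl⟩
      exact ⟨i, by rw [map_pow, hπ]⟩
    · rintro ⟨i, rfl⟩
      exact ⟨PresentedGroup.of i ^ k' i, ⟨i, rfl⟩, by rw [map_pow, hπ]⟩
  rw [himg]
  set T : Set (PresentedGroup (altRels p k)) :=
    {x | ∃ i : Fin p, x = (PresentedGroup.of i : PresentedGroup (altRels p k)) ^ k' i} with hT
  set H := Subgroup.normalClosure T with hH
  let q : PresentedGroup (altRels p k) →* PresentedGroup (altRels p k) ⧸ H :=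
    QuotientGroup.mk' H
  have hmem : ∀ x, x ∈ H → q x = 1 := fun x hx => (QuotientGroup.eq_one_iff x).mpr hx
  have hmem' : ∀ x, q x = 1 → x ∈ H := fun x hx => (QuotientGroup.eq_one_iff x).mp hx
  have hq1 : ∀ i : Fin p, q (PresentedGroup.of i ^ k' i) = 1 := fun i =>
    hmem _ (Subgroup.subset_normalClosure ⟨i, rfl⟩)
  set g : Fin p → PresentedGroup (altRels p k) ⧸ H := fun i => q (PresentedGroup.of i) with hg
  -- the product of all generators is 1 in W, hence in the quotient
  have hprodW : (List.ofFn (fun i : Fin p =>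
      (PresentedGroup.of i : PresentedGroup (altRels p k)))).prod = 1 := by
    have h1 : (PresentedGroup.mk (altRels p k))
        (List.ofFn (fun i : Fin p => FreeGroup.of i)).prod = 1 :=
      (QuotientGroup.eq_one_iff _).mpr (Subgroup.subset_normalClosure (Or.inr rfl))
    rw [map_list_prod, List.map_ofFn] at h1
    exact h1
  have hprodQ : (List.ofFn g).prod = 1 := by
    have h2 := congrArg q hprodW
    rw [map_list_prod, List.map_ofFn, map_one] at h2
    exact h2
  obtain ⟨i0, j0, hij⟩ := hred
  have hg1 : ∀ l, l ≠ i0 → l ≠ j0 → g l = 1 := by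
    intro l h1 h2
    have := hq1 l
    rwa [hij l h1 h2, pow_one] at this
  have hxpow : g i0 ^ k' i0 = 1 := by
    have := hq1 i0
    rwa [map_pow] at this
  have hypow : g j0 ^ k' j0 = 1 := by
    have := hq1 j0
    rwa [map_pow] at this
  -- rewrite the product over Fin p as a product over range p
  set F : ℕ → PresentedGroup (altRels p k) ⧸ H :=
    fun l => if h : l < p then g ⟨l, h⟩ else 1 with hF
  have hFprod : ((List.range p).map F).prod = 1 := by
    rw [← ofFn_prod_eq]; exact hprodQ
  have hFtriv : ∀ l, l < p → l ≠ (i0 : ℕ) → l ≠ (j0 : ℕ) → F l = 1 := by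
    intro l hl h1 h2
    simp only [hF, dif_pos hl]
    exact hg1 ⟨l, hl⟩ (by simp [Fin.ext_iff, h1]) (by simp [Fin.ext_iff, h2])
  have hFi0 : F (i0 : ℕ) = g i0 := by simp [hF, i0.isLt]
  have hFj0 : F (j0 : ℕ) = g j0 := by simp [hF, j0.isLt]
  -- show g i0 = 1 and g j0 = 1
  have hkey : g i0 = 1 ∧ g j0 = 1 := by
    rcases lt_trichotomy (i0 : ℕ) (j0 : ℕ) with hlt | heq | hgt
    · have hpr := prodL2 F (i0 : ℕ) (j0 : ℕ) hlt p j0.isLt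
        (fun l hl h1 h2 => hFtriv l hl h1 h2)
      rw [hFprod, hFi0, hFj0] at hpr
      have hixy : g j0 = (g i0)⁻¹ := (inv_eq_of_mul_eq_one_right hpr.symm).symm
      have hy2 : g j0 ^ k' i0 = 1 := by
        rw [hixy, inv_pow, hxpow, inv_one]
      have hone : orderOf (g j0) = 1 := by
        have d1 := orderOf_dvd_of_pow_eq_one hy2
        have d2 := orderOf_dvd_of_pow_eq_one hypow
        have := Nat.dvd_gcd d1 d2
        rw [Nat.Coprime.gcd_eq_one (hcop i0 j0 (by intro h; rw [h] at hlt; omega))] at this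
        exact Nat.dvd_one.mp this
      have hy1 : g j0 = 1 := orderOf_eq_one_iff.mp hone
      refine ⟨?_, hy1⟩
      rw [hy1, mul_one] at hpr
      exact hpr.symm
    · have : i0 = j0 := Fin.ext heq
      subst this
      have hpr := prodL1 F (i0 : ℕ) p i0.isLt
        (fun l hl h1 => hFtriv l hl h1 h1)
      rw [hFprod, hFi0] at hpr
      exact ⟨hpr.symm, hpr.symm⟩
    · have hpr := prodL2 F (j0 : ℕ) (i0 : ℕ) hgt p i0.isLt
        (fun l hl h1 h2 => hFtriv l hl h2 h1)
      rw [hFprod, hFi0, hFj0] at hpr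
      have hixy : g i0 = (g j0)⁻¹ := (inv_eq_of_mul_eq_one_right hpr.symm).symm
      have hx2 : g i0 ^ k' j0 = 1 := by
        rw [hixy, inv_pow, hypow, inv_one]
      have hone : orderOf (g i0) = 1 := by
        have d1 := orderOf_dvd_of_pow_eq_one hx2
        have d2 := orderOf_dvd_of_pow_eq_one hxpow
        have := Nat.dvd_gcd d2 d1
        rw [Nat.Coprime.gcd_eq_one (hcop i0 j0 (by intro h; rw [h] at hgt; omega))] at this
        exact Nat.dvd_one.mp this
      have hx1 : g i0 = 1 := orderOf_eq_one_iff.mp hone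
      refine ⟨hx1, ?_⟩
      rw [hx1, mul_one] at hpr
      exact hpr.symm
  have hall : ∀ i : Fin p, g i = 1 := by
    intro l
    by_cases h1 : l = i0
    · exact h1 ▸ hkey.1
    by_cases h2 : l = j0
    · exact h2 ▸ hkey.2
    exact hg1 l h1 h2
  have hqall : ∀ x, q x = 1 := by
    intro x
    have hx' : x ∈ Subgroup.closure
        (Set.range (PresentedGroup.of : Fin p → PresentedGroup (altRels p k))) := by
      rw [PresentedGroup.closure_range_of]; trivial
    refine Subgroup.closure_induction ?_ ?_ ?_ ?_ hx'
    · rintro _ ⟨i, rfl⟩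
      exact hall i
    · exact map_one q
    · intro a b _ _ ha hb
      rw [map_mul, ha, hb, one_mul]
    · intro a _ ha
      rw [map_inv, ha, inv_one]
  rw [eq_top_iff]
  intro x _
  exact hmem' x (hqall x)
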